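/- The cone over the Ish arrangement c(Ish_ℓ) is a free arrangement with exponents (0, 1, ℓ, ℓ, …, ℓ), where ℓ appears ℓ−1 times. -/

import Mathlib

open MvPolynomial

noncomputable section

def logDer (K : Type*) [CommRing K] {σ : Type*} (A : Set (MvPolynomial σ K)) :
    Submodule (MvPolynomial σ K)
      (Derivation K (MvPolynomial σ K) (MvPolynomial σ K)) where
  carrier := {θ | ∀ α ∈ A, θ α ∈ Ideal.span {α}}
  add_mem' := by
    intro θ η hθ hη α hα
    simpa using Ideal.add_mem _ (hθ α hα) (hη α hα)
  zero_mem' := by intro α hα; simp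
  smul_mem' := by
    intro r θ hθ α hα
    simpa [smul_eq_mul] using Ideal.mul_mem_left _ r (hθ α hα)

/-- A derivation is homogeneous of degree `d` if all its coefficients
(values on the variables) are homogeneous polynomials of degree `d`. -/
def IsHomogDeriv {K : Type*} [CommRing K] {σ : Type*}
    (θ : Derivation K (MvPolynomial σ K) (MvPolynomial σ K)) (d : ℕ) : Prop :=
  ∀ i : σ, (θ (X i)).IsHomogeneous d

/-- The defining linear forms of the cone over the Ish arrangement `Ish_ℓ` with
`ℓ = m+1 ≥ 1`: the forms are `z`, `x_i - x_j` (1 ≤ i < j ≤ ℓ) and `x_1 - x_j - i z`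
(1 ≤ i < j ≤ ℓ), in `K^{ℓ+1}`. Variables: `some i` is `x_{i+1}` for `i : Fin ℓ`,
`none` is `z`. -/
def coneIshL (K : Type*) [CommRing K] (m : ℕ) :
    Set (MvPolynomial (Option (Fin (m + 1))) K) :=
  {X none} ∪
    {p | ∃ i j : Fin (m + 1), i < j ∧ p = X (some i) - X (some j)} ∪
    {p | ∃ i j : Fin (m + 1), i < j ∧
      p = X (some 0) - X (some j) - C ((i : ℕ) + 1 : K) * X none}

open Finset

set_option linter.unusedSectionVars false
set_option linter.unnecessarySimpa false
set_option linter.unusedVariables false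
set_option maxHeartbeats 1000000

section IshAux

variable (K : Type*) [Field K] [CharZero K] (m : ℕ)

abbrev SS := MvPolynomial (Option (Fin (m+1))) K

def xx (j : Fin (m+1)) : SS K m := X (some j)
def zz : SS K m := X none

def GG (t : ℕ) (s : SS K m) : SS K m :=
  (∏ k ∈ Finset.range (t+1), (xx K m 0 - s - C (k:K) * zz K m)) *
  (∏ j ∈ Finset.univ.filter (fun j : Fin (m+1) => t < (j:ℕ)), (s - xx K m j))

def cf : Fin (m+2) → Option (Fin (m+1)) → SS K m := fun i v =>
  if i.val = 0 then v.elim 0 (fun _ => 1)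
  else if i.val = 1 then X v
  else v.elim 0 (fun j => if (j:ℕ) ≤ i.val - 1 then GG K m (i.val - 1) (xx K m j) else 0)

def th (i : Fin (m+2)) : Derivation K (SS K m) (SS K m) := mkDerivation K (cf K m i)

@[simp] lemma th_X (i : Fin (m+2)) (v : Option (Fin (m+1))) :
    th K m i (X v) = cf K m i v := mkDerivation_X K _ v

-- the iso moving variable (some t) to the polynomial position
def Emap (t : Fin (m+1)) :
    SS K m ≃ₐ[K] Polynomial (MvPolynomial (Fin (m+1)) K) :=
  (renameEquiv K (Equiv.swap (some t) none)).trans (optionEquivLeft K (Fin (m+1)))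

lemma Emap_X_self (t : Fin (m+1)) : Emap K m t (xx K m t) = Polynomial.X := by
  simp [Emap, xx, rename_X, Equiv.swap_apply_left, optionEquivLeft_X_none]

lemma Emap_X_other (t i : Fin (m+1)) (h : i ≠ t) :
    Emap K m t (xx K m i) = Polynomial.C (X i) := by
  simp only [Emap, xx, AlgEquiv.trans_apply, renameEquiv_apply, rename_X]
  rw [Equiv.swap_apply_of_ne_of_ne (by simpa using h) (by simp)]
  exact optionEquivLeft_X_some K (Fin (m+1)) i

lemma Emap_z (t : Fin (m+1)) : Emap K m t (zz K m) = Polynomial.C (X t) := by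
  simp only [Emap, zz, AlgEquiv.trans_apply, renameEquiv_apply, rename_X,
    Equiv.swap_apply_right]
  exact optionEquivLeft_X_some K (Fin (m+1)) t

lemma Emap_C (t : Fin (m+1)) (a : K) : Emap K m t (C a) = Polynomial.C (C a) := by
  simp only [Emap, AlgEquiv.trans_apply, renameEquiv_apply, rename_C]
  exact optionEquivLeft_C K (Fin (m+1)) a

lemma prime_sub (t i : Fin (m+1)) (h : t ≠ i) : Prime (xx K m t - xx K m i) := by
  rw [← MulEquiv.prime_iff (Emap K m t).toRingEquiv.toMulEquiv]
  have : (Emap K m t).toRingEquiv.toMulEquiv (xx K m t - xx K m i)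
      = Polynomial.X - Polynomial.C (X i) := by
    show Emap K m t _ = _
    rw [map_sub, Emap_X_self, Emap_X_other K m t i (Ne.symm h)]
  rw [this]
  exact Polynomial.prime_X_sub_C (X i)

lemma prime_form (t : Fin (m+1)) (h : t ≠ 0) (a : K) :
    Prime (xx K m 0 - xx K m t - C a * zz K m) := by
  rw [← MulEquiv.prime_iff (Emap K m t).toRingEquiv.toMulEquiv]
  have : (Emap K m t).toRingEquiv.toMulEquiv (xx K m 0 - xx K m t - C a * zz K m)
      = -(Polynomial.X - Polynomial.C (X 0 - C a * X t)) := by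
    show Emap K m t _ = _
    rw [map_sub, map_sub, map_mul, Emap_X_self, Emap_X_other K m t 0 (Ne.symm h), Emap_z, Emap_C]
    rw [map_sub, map_mul]
    ring
  rw [this]
  exact (Polynomial.prime_X_sub_C (X 0 - C a * X t)).neg


lemma not_dvd_of_eval (p q : SS K m) (v : Option (Fin (m+1)) → K)
    (hp : eval v p = 0) (hq : eval v q ≠ 0) : ¬ p ∣ q := by
  rintro ⟨r, rfl⟩
  exact hq (by rw [map_mul, hp, zero_mul])

section NotDvd
variable (t : Fin (m+1)) (ht : t ≠ 0)

lemma ht0 (ht : t ≠ 0) : (t:ℕ) ≠ 0 := by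
  intro h; apply ht; ext; simp [h]

lemma pk_not_dvd_pk (ht : t ≠ 0) (k k' : ℕ) (h : k ≠ k') :
    ¬ (xx K m 0 - xx K m t - C (k:K) * zz K m) ∣ (xx K m 0 - xx K m t - C (k':K) * zz K m) := by
  apply not_dvd_of_eval K m _ _
    (fun w => if w = some 0 then (k:K) else if w = none then 1 else 0)
  · simp [xx, zz, Option.some.injEq, ht]
  · have : ((k:K) - (k':K)) ≠ 0 := sub_ne_zero_of_ne (by exact_mod_cast h)
    simpa [xx, zz, Option.some.injEq, ht] using this

lemma pk_not_dvd_qj (ht : t ≠ 0) (k : ℕ) (j : Fin (m+1)) (hj : t ≠ j) (hj0 : j ≠ 0) :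
    ¬ (xx K m 0 - xx K m t - C (k:K) * zz K m) ∣ (xx K m t - xx K m j) := by
  apply not_dvd_of_eval K m _ _
    (fun w => if w = some 0 then (k:K) else if w = none then 1 else
      if w = some j then 1 else 0)
  · simp [xx, zz, Option.some.injEq, ht, hj]
  · simp [xx, zz, Option.some.injEq, ht, hj, hj0, Ne.symm hj]

lemma qj_not_dvd_pk (ht : t ≠ 0) (k : ℕ) (j : Fin (m+1)) (hj0 : j ≠ 0) :
    ¬ (xx K m t - xx K m j) ∣ (xx K m 0 - xx K m t - C (k:K) * zz K m) := by
  apply not_dvd_of_eval K m _ _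
    (fun w => if w = some 0 then (k:K)+1 else 0)
  · simp [xx, zz, Option.some.injEq, ht, hj0]
  · simp only [xx, zz, eval_sub, eval_mul, eval_X, eval_C, Option.some.injEq, ht, hj0]
    simpa using Nat.cast_add_one_ne_zero k

lemma qj_not_dvd_qj (j j' : Fin (m+1)) (hj : j ≠ j') (htj : t ≠ j) (htj' : t ≠ j') :
    ¬ (xx K m t - xx K m j) ∣ (xx K m t - xx K m j') := by
  apply not_dvd_of_eval K m _ _ (fun w => if w = some j' then 1 else 0)
  · simp [xx, zz, Option.some.injEq, htj', hj]
  · simp [xx, zz, Option.some.injEq, htj']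

end NotDvd


-- product of pairwise non-dividing primes divides
lemma prods_dvd {ι : Type*} [DecidableEq ι] (s : Finset ι) (f : ι → SS K m)
    (hp : ∀ i ∈ s, Prime (f i)) (hnd : ∀ i ∈ s, ∀ j ∈ s, i ≠ j → ¬ f i ∣ f j) :
    ∀ a : SS K m, (∀ i ∈ s, f i ∣ a) → (∏ i ∈ s, f i) ∣ a := by
  classical
  induction s using Finset.induction_on with
  | empty => intro a _; simpa using one_dvd a
  | insert x s hx ih =>
    intro a hd
    obtain ⟨b, rfl⟩ := hd x (mem_insert_self x s)
    rw [prod_insert hx]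
    refine mul_dvd_mul_left _ (ih (fun i hi => hp i (mem_insert_of_mem hi))
      (fun i hi j hj hij => hnd i (mem_insert_of_mem hi) j (mem_insert_of_mem hj) hij) b ?_)
    intro i hi
    have hdvd := hd i (mem_insert_of_mem hi)
    have hpi := hp i (mem_insert_of_mem hi)
    rcases (hpi.dvd_mul).mp hdvd with h | h
    · exact absurd h (hnd i (mem_insert_of_mem hi) x (mem_insert_self x s)
        (fun he => hx (he ▸ hi)))
    · exact h


lemma GG_x0 (t : ℕ) : GG K m t (xx K m 0) = 0 := by
  rw [GG]
  apply mul_eq_zero_of_left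
  apply Finset.prod_eq_zero (Finset.mem_range.mpr (Nat.succ_pos t))
  simp

lemma prod_sub_prod_dvd {ι : Type*} (s : Finset ι) (f g : ι → SS K m) (d : SS K m)
    (h : ∀ i ∈ s, d ∣ f i - g i) : d ∣ (∏ i ∈ s, f i) - ∏ i ∈ s, g i := by
  classical
  induction s using Finset.induction_on with
  | empty => simp
  | insert x s hx ih =>
    rw [prod_insert hx, prod_insert hx]
    have h1 : d ∣ f x - g x := h x (mem_insert_self x s)
    have h2 : d ∣ (∏ i ∈ s, f i) - ∏ i ∈ s, g i :=
      ih (fun i hi => h i (mem_insert_of_mem hi))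
    have hid : f x * ∏ i ∈ s, f i - g x * ∏ i ∈ s, g i
        = f x * ((∏ i ∈ s, f i) - ∏ i ∈ s, g i) + (f x - g x) * ∏ i ∈ s, g i := by ring
    rw [hid]
    exact dvd_add (h2.mul_left _) (h1.mul_right _)

lemma dvd_GG_sub (t : ℕ) (s s' d : SS K m) (h : d ∣ s - s') :
    d ∣ GG K m t s - GG K m t s' := by
  rw [GG, GG]
  have hA : d ∣ (∏ k ∈ Finset.range (t+1), (xx K m 0 - s - C (k:K) * zz K m))
      - ∏ k ∈ Finset.range (t+1), (xx K m 0 - s' - C (k:K) * zz K m) := by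
    apply prod_sub_prod_dvd
    intro k _
    have : (xx K m 0 - s - C (k:K) * zz K m) - (xx K m 0 - s' - C (k:K) * zz K m)
        = -(s - s') := by ring
    rw [this]
    exact dvd_neg.mpr h
  have hB : d ∣ (∏ j ∈ Finset.univ.filter (fun j : Fin (m+1) => t < (j:ℕ)), (s - xx K m j))
      - ∏ j ∈ Finset.univ.filter (fun j : Fin (m+1) => t < (j:ℕ)), (s' - xx K m j) := by
    apply prod_sub_prod_dvd
    intro j _
    have : (s - xx K m j) - (s' - xx K m j) = s - s' := by ring
    rw [this]; exact h
  set A := ∏ k ∈ Finset.range (t+1), (xx K m 0 - s - C (k:K) * zz K m)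
  set A' := ∏ k ∈ Finset.range (t+1), (xx K m 0 - s' - C (k:K) * zz K m)
  set B := ∏ j ∈ Finset.univ.filter (fun j : Fin (m+1) => t < (j:ℕ)), (s - xx K m j)
  set B' := ∏ j ∈ Finset.univ.filter (fun j : Fin (m+1) => t < (j:ℕ)), (s' - xx K m j)
  have hid : A * B - A' * B' = A * (B - B') + (A - A') * B' := by ring
  rw [hid]
  exact dvd_add (hB.mul_left _) (hA.mul_right _)

lemma dvd_GG (t : Fin (m+1)) (ht : t ≠ 0) (a : SS K m)
    (h1 : ∀ k : ℕ, k ≤ (t:ℕ) → (xx K m 0 - xx K m t - C (k:K) * zz K m) ∣ a)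
    (h2 : ∀ j : Fin (m+1), (t:ℕ) < (j:ℕ) → (xx K m t - xx K m j) ∣ a) :
    GG K m (t:ℕ) (xx K m t) ∣ a := by
  classical
  have hmemF : ∀ j ∈ Finset.univ.filter (fun j : Fin (m+1) => (t:ℕ) < (j:ℕ)),
      (t:ℕ) < (j:ℕ) := by intro j hj; simpa using hj
  have hne : ∀ j ∈ Finset.univ.filter (fun j : Fin (m+1) => (t:ℕ) < (j:ℕ)), t ≠ j := by
    intro j hj he
    have := hmemF j hj
    rw [← he] at this
    omega
  have hj0 : ∀ j ∈ Finset.univ.filter (fun j : Fin (m+1) => (t:ℕ) < (j:ℕ)), j ≠ 0 := by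
    intro j hj
    have h1' := hmemF j hj
    intro he
    rw [he] at h1'
    simp at h1'
  have hBdvd : (∏ j ∈ Finset.univ.filter (fun j : Fin (m+1) => (t:ℕ) < (j:ℕ)),
      (xx K m t - xx K m j)) ∣ a := by
    apply prods_dvd K m _ _ (fun j hj => prime_sub K m t j (hne j hj))
      (fun i hi j hj hij => qj_not_dvd_qj K m t i j hij (hne i hi) (hne j hj))
    exact fun j hj => h2 j (hmemF j hj)
  obtain ⟨b, hab⟩ := hBdvd
  have hpk_b : ∀ k ∈ Finset.range ((t:ℕ)+1),
      (xx K m 0 - xx K m t - C (k:K) * zz K m) ∣ b := by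
    intro k hk
    have hkle : k ≤ (t:ℕ) := by have := Finset.mem_range.mp hk; omega
    have hd := h1 k hkle
    rw [hab] at hd
    have hpk := prime_form K m t ht (k:K)
    rcases hpk.dvd_mul.mp hd with h | h
    · exfalso
      obtain ⟨j, hj, hdvd⟩ := (hpk.dvd_finset_prod_iff _).mp h
      exact pk_not_dvd_qj K m t ht k j (hne j hj) (hj0 j hj) hdvd
    · exact h
  have hAdvd : (∏ k ∈ Finset.range ((t:ℕ)+1),
      (xx K m 0 - xx K m t - C (k:K) * zz K m)) ∣ b := by
    apply prods_dvd K m (Finset.range ((t:ℕ)+1))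
      (fun k : ℕ => xx K m 0 - xx K m t - C (k:K) * zz K m)
      (fun k _ => prime_form K m t ht (k:K))
      (fun i _ j _ hij => pk_not_dvd_pk K m t ht i j hij)
    exact hpk_b
  rw [GG, hab, mul_comm (∏ j ∈ _, _) b]
  exact mul_dvd_mul hAdvd dvd_rfl

lemma GG_ne_zero (t : Fin (m+1)) (ht : t ≠ 0) : GG K m (t:ℕ) (xx K m t) ≠ 0 := by
  rw [GG]
  apply mul_ne_zero
  · rw [Finset.prod_ne_zero_iff]
    exact fun k _ => (prime_form K m t ht (k:K)).ne_zero
  · rw [Finset.prod_ne_zero_iff]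
    intro j hj
    have hne : t ≠ j := by
      intro he
      have : (t:ℕ) < (j:ℕ) := by simpa using hj
      rw [← he] at this; omega
    exact (prime_sub K m t j hne).ne_zero


lemma D_form3 (D : Derivation K (SS K m) (SS K m)) (c : K) (j : Fin (m+1)) :
    D (X (some 0) - X (some j) - C c * X none)
      = D (X (some 0)) - D (X (some j)) - C c * D (X none) := by
  rw [map_sub, map_sub]
  congr 1
  rw [Derivation.leibniz]
  simp [smul_eq_mul, mul_comm]

lemma mem_logDer_iff (D : Derivation K (SS K m) (SS K m)) :
    D ∈ logDer K (coneIshL K m) ↔ ∀ α ∈ coneIshL K m, α ∣ D α := by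
  constructor
  · intro h α hα; exact Ideal.mem_span_singleton.mp (h α hα)
  · intro h α hα; exact Ideal.mem_span_singleton.mpr (h α hα)

lemma th_mem (i : Fin (m+2)) : th K m i ∈ logDer K (coneIshL K m) := by
  rw [mem_logDer_iff]
  intro α hα
  simp only [coneIshL, Set.mem_union, Set.mem_singleton_iff, Set.mem_setOf_eq] at hα
  rcases hα with (hα | ⟨i', j', hij, rfl⟩) | ⟨i0, j', hij, rfl⟩
  · subst hα
    rw [th_X]
    simp only [cf]
    split_ifs <;> simp
  · rw [map_sub, th_X, th_X]
    have hval : (i':ℕ) < (j':ℕ) := Fin.lt_def.mp hij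
    simp only [cf]
    split_ifs with h0 h1
    · simp
    · exact dvd_refl _
    · simp only [Option.elim]
      by_cases hj : (j':ℕ) ≤ i.val - 1
      · have hi : (i':ℕ) ≤ i.val - 1 := le_trans (le_of_lt hval) hj
        rw [if_pos hi, if_pos hj]
        exact dvd_GG_sub K m _ _ _ _ dvd_rfl
      · rw [if_neg hj, sub_zero]
        by_cases hi : (i':ℕ) ≤ i.val - 1
        · rw [if_pos hi, GG]
          apply Dvd.dvd.mul_left
          have hmem : j' ∈ Finset.univ.filter (fun j : Fin (m+1) => i.val - 1 < (j:ℕ)) := by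
            simp; omega
          exact Finset.dvd_prod_of_mem _ hmem
        · rw [if_neg hi]; simp
  · rw [D_form3, th_X, th_X, th_X]
    have hval : (i0:ℕ) < (j':ℕ) := Fin.lt_def.mp hij
    simp only [cf]
    split_ifs with h0 h1
    · simp
    · exact dvd_refl _
    · simp only [Option.elim]
      have h0le : ((0 : Fin (m+1)):ℕ) ≤ i.val - 1 := by simp
      rw [if_pos h0le, mul_zero, sub_zero]
      have hx0 : GG K m (i.val - 1) (xx K m 0) = 0 := GG_x0 K m _
      rw [hx0, zero_sub, dvd_neg]
      by_cases hj : (j':ℕ) ≤ i.val - 1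
      · rw [if_pos hj, GG]
        apply Dvd.dvd.mul_right
        have hmem : (i0:ℕ)+1 ∈ Finset.range ((i.val - 1)+1) := by
          simp; omega
        have := Finset.dvd_prod_of_mem
          (fun k : ℕ => xx K m 0 - xx K m j' - C (k:K) * zz K m) hmem
        simpa [xx, zz, Nat.cast_add, Nat.cast_one] using this
      · rw [if_neg hj]; simp


lemma card_filter_gt (t : ℕ) (ht : t ≤ m) :
    (Finset.univ.filter (fun j : Fin (m+1) => t < (j:ℕ))).card = m - t := by
  have : Finset.univ.filter (fun j : Fin (m+1) => t < (j:ℕ)) = Finset.Ioi ⟨t, by omega⟩ := by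
    ext j
    simp [Finset.mem_Ioi, Fin.lt_def]
  rw [this, Fin.card_Ioi]
  simp

lemma GG_homog (t : ℕ) (ht : t ≤ m) (j : Fin (m+1)) :
    (GG K m t (xx K m j)).IsHomogeneous (m+1) := by
  rw [GG]
  have hA : (∏ k ∈ Finset.range (t+1),
      (xx K m 0 - xx K m j - C (k:K) * zz K m)).IsHomogeneous (t+1) := by
    have := IsHomogeneous.prod (Finset.range (t+1))
      (fun k : ℕ => xx K m 0 - xx K m j - C (k:K) * zz K m) (fun _ => 1)
      (fun k _ => ((isHomogeneous_X K (some 0)).sub (isHomogeneous_X K (some j))).sub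
        (isHomogeneous_C_mul_X (k:K) none))
    simpa using this
  have hB : (∏ j' ∈ Finset.univ.filter (fun j' : Fin (m+1) => t < (j':ℕ)),
      (xx K m j - xx K m j')).IsHomogeneous (m - t) := by
    have := IsHomogeneous.prod (Finset.univ.filter (fun j' : Fin (m+1) => t < (j':ℕ)))
      (fun j' => xx K m j - xx K m j') (fun _ => 1)
      (fun j' _ => (isHomogeneous_X K (some j)).sub (isHomogeneous_X K (some j')))
    simpa [card_filter_gt m t ht] using this
  have := hA.mul hB
  have he : (t+1) + (m - t) = m + 1 := by omega
  rwa [he] at this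

lemma sum_app {ι : Type*} (s : Finset ι) (f : ι → Derivation K (SS K m) (SS K m))
    (p : SS K m) : (∑ i ∈ s, f i) p = ∑ i ∈ s, f i p := by
  classical
  induction s using Finset.induction_on with
  | empty => simp
  | insert x s hx ih =>
    rw [Finset.sum_insert hx, Finset.sum_insert hx, Derivation.add_apply, ih]

lemma spanning_aux : ∀ t : ℕ, t ≤ m →
    ∀ θ : Derivation K (SS K m) (SS K m), θ ∈ logDer K (coneIshL K m) →
    θ (X none) = 0 → θ (X (some 0)) = 0 →
    (∀ j : Fin (m+1), t < (j:ℕ) → θ (X (some j)) = 0) →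
    ∃ c : Fin (m+2) → SS K m, θ = ∑ i, c i • th K m i := by
  intro t
  induction t with
  | zero =>
    intro _ θ hθ hz h0 hj
    refine ⟨0, ?_⟩
    have hall : ∀ v, θ (X v) = 0 := by
      intro v
      match v with
      | none => exact hz
      | some j =>
        rcases Nat.eq_zero_or_pos (j:ℕ) with hj0 | hjpos
        · have : j = 0 := by simp [Fin.ext_iff, hj0]
          rw [this]; exact h0
        · exact hj j hjpos
    have : θ = 0 := derivation_ext (fun v => by rw [hall v]; simp)
    rw [this]; simp
  | succ t ih =>
    intro hle θ hθ hz h0 hj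
    have hTlt : t + 1 < m + 1 := by omega
    set T : Fin (m+1) := ⟨t+1, hTlt⟩ with hTdef
    have hT0 : T ≠ 0 := by simp [hTdef, Fin.ext_iff]
    have hTval : (T:ℕ) = t+1 := rfl
    have h1 : ∀ k : ℕ, k ≤ (T:ℕ) →
        (xx K m 0 - xx K m T - C (k:K) * zz K m) ∣ θ (X (some T)) := by
      intro k hk
      rcases Nat.eq_zero_or_pos k with rfl | hkpos
      · have h0T : (0 : Fin (m+1)) < T := by
          rw [Fin.lt_def]; simp [hTdef]
        have hmem : (X (some (0 : Fin (m+1))) - X (some T) : SS K m) ∈ coneIshL K m := by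
          left; right; exact ⟨0, T, h0T, rfl⟩
        have hdvd := (mem_logDer_iff K m θ).mp hθ _ hmem
        rw [map_sub, h0, zero_sub, dvd_neg] at hdvd
        have heq : (xx K m 0 - xx K m T - C ((0:ℕ):K) * zz K m)
            = X (some (0 : Fin (m+1))) - X (some T) := by
          simp [xx, zz]
        rw [heq]
        exact hdvd
      · have hkm : k - 1 < m + 1 := by omega
        set i0 : Fin (m+1) := ⟨k-1, hkm⟩ with hi0
        have hi0T : i0 < T := by rw [Fin.lt_def]; simp [hi0, hTdef]; omega
        have hmem : (X (some (0 : Fin (m+1))) - X (some T)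
            - C ((i0:ℕ) + 1 : K) * X none : SS K m) ∈ coneIshL K m := by
          right; exact ⟨i0, T, hi0T, rfl⟩
        have hdvd := (mem_logDer_iff K m θ).mp hθ _ hmem
        rw [D_form3, h0, hz, mul_zero, sub_zero, zero_sub, dvd_neg] at hdvd
        have hn : (i0:ℕ) + 1 = k := by simp only [hi0]; omega
        have heq : (xx K m 0 - xx K m T - C ((k:ℕ):K) * zz K m)
            = X (some (0 : Fin (m+1))) - X (some T) - C ((i0:ℕ) + 1 : K) * X none := by
          rw [show ((i0:ℕ) + 1 : K) = ((k:ℕ):K) by exact_mod_cast congrArg (Nat.cast (R := K)) hn]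
          simp [xx, zz]
        rw [heq]
        exact hdvd
    have h2 : ∀ j : Fin (m+1), (T:ℕ) < (j:ℕ) →
        (xx K m T - xx K m j) ∣ θ (X (some T)) := by
      intro j hlt
      have hmem : (X (some T) - X (some j) : SS K m) ∈ coneIshL K m := by
        left; right; exact ⟨T, j, Fin.lt_def.mpr hlt, rfl⟩
      have hdvd := (mem_logDer_iff K m θ).mp hθ _ hmem
      rw [map_sub, hj j (by omega), sub_zero] at hdvd
      exact hdvd
    obtain ⟨q, hq⟩ := dvd_GG K m T hT0 _ h1 h2
    have hidxlt : t + 2 < m + 2 := by omega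
    set idx : Fin (m+2) := ⟨t+2, hidxlt⟩ with hidx
    have hcfnone : cf K m idx none = 0 := by
      simp [cf, hidx]
    have hcfj : ∀ j : Fin (m+1), cf K m idx (some j)
        = if (j:ℕ) ≤ t+1 then GG K m (t+1) (xx K m j) else 0 := by
      intro j
      simp [cf, hidx]
    set θ' := θ - q • th K m idx with hθ'def
    have hθ'mem : θ' ∈ logDer K (coneIshL K m) :=
      Submodule.sub_mem _ hθ (Submodule.smul_mem _ q (th_mem K m idx))
    have hθ'z : θ' (X none) = 0 := by
      rw [hθ'def, Derivation.sub_apply, Derivation.smul_apply, th_X, hcfnone, hz]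
      simp
    have hθ'0 : θ' (X (some 0)) = 0 := by
      rw [hθ'def, Derivation.sub_apply, Derivation.smul_apply, th_X, hcfj, h0]
      rw [if_pos (by simp), GG_x0]
      simp
    have hθ'j : ∀ j : Fin (m+1), t < (j:ℕ) → θ' (X (some j)) = 0 := by
      intro j hlt
      rw [hθ'def, Derivation.sub_apply, Derivation.smul_apply, th_X, hcfj]
      by_cases hje : (j:ℕ) = t+1
      · have hjT : j = T := by simp [Fin.ext_iff, hje, hTdef]
        rw [if_pos (by omega), hjT]
        rw [show GG K m (t+1) (xx K m T) = GG K m (T:ℕ) (xx K m T) by rw [hTval]]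
        rw [hq, smul_eq_mul]
        ring
      · rw [if_neg (by omega), hj j (by omega), smul_zero, sub_zero]
    obtain ⟨c, hc⟩ := ih (by omega) θ' hθ'mem hθ'z hθ'0 hθ'j
    refine ⟨fun i => c i + if i = idx then q else 0, ?_⟩
    have hsplit : θ = θ' + q • th K m idx := by
      rw [hθ'def]; abel
    rw [hsplit, hc]
    have hfun : ∀ i : Fin (m+2), (c i + if i = idx then q else 0) • th K m i
        = c i • th K m i + (if i = idx then q • th K m idx else 0) := by
      intro i
      rw [add_smul]
      congr 1
      split_ifs with h
      · rw [h]
      · rw [zero_smul]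
    simp_rw [hfun]
    rw [Finset.sum_add_distrib, Finset.sum_ite_eq' Finset.univ idx
      (fun _ => q • th K m idx)]
    simp

lemma spanning (θ : Derivation K (SS K m) (SS K m)) (hθ : θ ∈ logDer K (coneIshL K m)) :
    ∃ c : Fin (m+2) → SS K m, θ = ∑ i, c i • th K m i := by
  have hzmem : (X none : SS K m) ∈ coneIshL K m := by left; left; rfl
  obtain ⟨p, hp⟩ := (mem_logDer_iff K m θ).mp hθ _ hzmem
  have h1lt : 1 < m + 2 := by omega
  have h0lt : 0 < m + 2 := by omega
  set e1 : Fin (m+2) := ⟨1, h1lt⟩ with he1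
  set e0 : Fin (m+2) := ⟨0, h0lt⟩ with he0
  have hcf1 : ∀ v, cf K m e1 v = X v := by intro v; simp [cf, he1]
  have hcf0none : cf K m e0 none = 0 := by simp [cf, he0]
  have hcf0some : ∀ j : Fin (m+1), cf K m e0 (some j) = 1 := by
    intro j; simp [cf, he0]
  set r : SS K m := θ (X (some 0)) - p * X (some 0) with hr
  set θ1 := θ - p • th K m e1 - r • th K m e0 with hθ1
  have hθ1mem : θ1 ∈ logDer K (coneIshL K m) :=
    Submodule.sub_mem _ (Submodule.sub_mem _ hθ (Submodule.smul_mem _ p (th_mem K m e1)))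
      (Submodule.smul_mem _ r (th_mem K m e0))
  have hθ1z : θ1 (X none) = 0 := by
    rw [hθ1, Derivation.sub_apply, Derivation.sub_apply, Derivation.smul_apply,
      Derivation.smul_apply, th_X, th_X, hcf1, hcf0none, hp]
    rw [smul_eq_mul]
    ring_nf
  have hθ10 : θ1 (X (some 0)) = 0 := by
    rw [hθ1, Derivation.sub_apply, Derivation.sub_apply, Derivation.smul_apply,
      Derivation.smul_apply, th_X, th_X, hcf1, hcf0some]
    rw [smul_eq_mul, smul_eq_mul, mul_one, hr]
    ring
  obtain ⟨c, hc⟩ := spanning_aux K m m le_rfl θ1 hθ1mem hθ1z hθ10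
    (fun j hlt => absurd j.isLt (by omega))
  refine ⟨fun i => c i + (if i = e1 then p else 0) + (if i = e0 then r else 0), ?_⟩
  have hsplit : θ = θ1 + p • th K m e1 + r • th K m e0 := by rw [hθ1]; abel
  rw [hsplit, hc]
  have hfun : ∀ i : Fin (m+2),
      (c i + (if i = e1 then p else 0) + (if i = e0 then r else 0)) • th K m i
      = c i • th K m i + (if i = e1 then p • th K m e1 else 0)
        + (if i = e0 then r • th K m e0 else 0) := by
    intro i
    rw [add_smul, add_smul]
    congr 1
    · congr 1
      split_ifs with h
      · rw [h]
      · rw [zero_smul]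
    · split_ifs with h
      · rw [h]
      · rw [zero_smul]
  simp_rw [hfun]
  rw [Finset.sum_add_distrib, Finset.sum_add_distrib,
    Finset.sum_ite_eq' Finset.univ e1 (fun _ => p • th K m e1),
    Finset.sum_ite_eq' Finset.univ e0 (fun _ => r • th K m e0)]
  simp

lemma indep_aux (g : Fin (m+2) → SS K m) (h : ∑ i, g i • th K m i = 0) :
    ∀ i, g i = 0 := by
  have hv : ∀ v, ∑ i, g i * cf K m i v = 0 := by
    intro v
    have := congrArg (fun D : Derivation K (SS K m) (SS K m) => D (X v)) h
    simp only [Derivation.zero_apply] at this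
    rw [sum_app] at this
    simpa [Derivation.smul_apply, smul_eq_mul] using this
  have h1lt : 1 < m + 2 := by omega
  have h0lt : 0 < m + 2 := by omega
  -- g at index 1
  have hg1 : g ⟨1, h1lt⟩ = 0 := by
    have := hv none
    rw [Finset.sum_eq_single ⟨1, h1lt⟩ (fun i _ hne => ?_) (by simp)] at this
    · have hcf : cf K m ⟨1, h1lt⟩ none = X none := by simp [cf]
      rw [hcf] at this
      rcases mul_eq_zero.mp this with h' | h'
      · exact h'
      · exact absurd h' (X_ne_zero none)
    · have : ¬ i.val = 1 := fun he => hne (Fin.ext he)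
      rcases Nat.eq_zero_or_pos i.val with h0 | hpos
      · simp [cf, h0]
      · simp [cf, this, Nat.pos_iff_ne_zero.mp hpos]
  have hg0 : g ⟨0, h0lt⟩ = 0 := by
    have := hv (some 0)
    rw [Finset.sum_eq_single ⟨0, h0lt⟩ (fun i _ hne => ?_) (by simp)] at this
    · have hcf : cf K m ⟨0, h0lt⟩ (some 0) = 1 := by simp [cf]
      rw [hcf, mul_one] at this
      exact this
    · have hne0 : ¬ i.val = 0 := fun he => hne (Fin.ext he)
      by_cases h1 : i.val = 1
      · have : i = ⟨1, h1lt⟩ := Fin.ext h1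
        rw [this, hg1, zero_mul]
      · have hcf : cf K m i (some 0) = 0 := by
          simp only [cf, if_neg hne0, if_neg h1, Option.elim]
          rw [if_pos (by simp), GG_x0]
        rw [hcf, mul_zero]
  -- descent
  have step : ∀ r : ℕ, 1 ≤ r → r ≤ m →
      (∀ i : Fin (m+2), r + 1 < i.val → g i = 0) →
      (∀ i : Fin (m+2), r < i.val → g i = 0) := by
    intro r hr1 hrm hA i hi
    by_cases htop : r + 1 < i.val
    · exact hA i htop
    · have hival : i.val = r + 1 := by omega
      have hie : i = ⟨r+1, by omega⟩ := Fin.ext hival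
      have hTlt : r < m + 1 := by omega
      set T : Fin (m+1) := ⟨r, hTlt⟩ with hTdef
      have hT0 : T ≠ 0 := by simp [hTdef, Fin.ext_iff]; omega
      have hsum := hv (some T)
      rw [Finset.sum_eq_single ⟨r+1, by omega⟩ (fun i' _ hne => ?_) (by simp)] at hsum
      · have hcf : cf K m ⟨r+1, by omega⟩ (some T) = GG K m r (xx K m T) := by
          simp only [cf]
          rw [if_neg (by omega), if_neg (by omega), Option.elim]
          rw [if_pos (by simp [hTdef])]
          norm_num
        rw [hcf] at hsum
        rcases mul_eq_zero.mp hsum with h' | h'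
        · rw [hie]; exact h'
        · exfalso
          have := GG_ne_zero K m T hT0
          rw [show ((T:ℕ)) = r from rfl] at this
          exact this h'
      · have hne' : ¬ i'.val = r + 1 := fun he => hne (Fin.ext he)
        rcases Nat.lt_or_ge i'.val (r+2) with hlt | hge
        · -- i'.val ≤ r+1, so i'.val ≤ r
          rcases Nat.eq_zero_or_pos i'.val with h0 | hpos
          · have : i' = ⟨0, h0lt⟩ := Fin.ext h0
            rw [this, hg0, zero_mul]
          · by_cases h1 : i'.val = 1
            · have : i' = ⟨1, h1lt⟩ := Fin.ext h1
              rw [this, hg1, zero_mul]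
            · have hcf : cf K m i' (some T) = 0 := by
                simp only [cf, if_neg (Nat.pos_iff_ne_zero.mp hpos), if_neg h1, Option.elim]
                rw [if_neg (by simp [hTdef]; omega)]
              rw [hcf, mul_zero]
        · rw [hA i' (by omega), zero_mul]
  have desc : ∀ d : ℕ, d ≤ m → (∀ i : Fin (m+2), (m + 1 - d) < i.val → g i = 0) := by
    intro d
    induction d with
    | zero => intro _ i hi; exact absurd i.isLt (by omega)
    | succ d ihd =>
      intro hdm i hi
      have hprev := ihd (by omega)
      have := step (m - d) (by omega) (by omega) (fun i' hi' => hprev i' (by omega))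
      exact this i (by omega)
  intro i
  rcases Nat.eq_zero_or_pos i.val with h0 | hpos
  · have : i = ⟨0, h0lt⟩ := Fin.ext h0
    rw [this]; exact hg0
  · by_cases h1 : i.val = 1
    · have : i = ⟨1, h1lt⟩ := Fin.ext h1
      rw [this]; exact hg1
    · exact desc m le_rfl i (by omega)

def thN : Fin (m+2) → (logDer K (coneIshL K m)) := fun i => ⟨th K m i, th_mem K m i⟩

lemma coe_sumN {ι : Type*} (s : Finset ι) (f : ι → (logDer K (coneIshL K m))) :
    ((∑ i ∈ s, f i : (logDer K (coneIshL K m))) : Derivation K (SS K m) (SS K m))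
      = ∑ i ∈ s, (f i : Derivation K (SS K m) (SS K m)) := by
  classical
  induction s using Finset.induction_on with
  | empty => rfl
  | insert x s hx ih =>
    rw [Finset.sum_insert hx, Finset.sum_insert hx, Submodule.coe_add, ih]

lemma indepN : LinearIndependent (SS K m) (thN K m) := by
  refine (Fintype.linearIndependent_iff (R := SS K m) (v := thN K m)).mpr (fun g hg => ?_)
  apply indep_aux K m g
  have h2 := congrArg (fun x : (logDer K (coneIshL K m)) =>
    (x : Derivation K (SS K m) (SS K m))) hg
  rw [coe_sumN] at h2
  simp only [Submodule.coe_smul] at h2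
  exact h2

lemma spanN : ⊤ ≤ Submodule.span (SS K m) (Set.range (thN K m)) := by
  intro x _
  obtain ⟨c, hc⟩ := spanning K m (x : Derivation K (SS K m) (SS K m)) x.2
  have hx : x = ∑ i, c i • thN K m i := by
    apply Subtype.ext
    rw [coe_sumN]
    simp only [Submodule.coe_smul]
    exact hc
  rw [hx]
  exact Submodule.sum_mem _ (fun i _ =>
    Submodule.smul_mem _ _ (Submodule.subset_span ⟨i, rfl⟩))

lemma th_homog (i : Fin (m+2)) (v : Option (Fin (m+1))) :
    (th K m i (X v)).IsHomogeneous
      (if i.val = 0 then 0 else if i.val = 1 then 1 else m + 1) := by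
  rw [th_X]
  by_cases h0 : i.val = 0
  · rw [if_pos h0]
    simp only [cf, if_pos h0]
    match v with
    | none => exact isHomogeneous_zero _ _ _
    | some j => exact isHomogeneous_one _ _
  · rw [if_neg h0]
    by_cases h1 : i.val = 1
    · rw [if_pos h1]
      simp only [cf, if_neg h0, if_pos h1]
      exact isHomogeneous_X _ _
    · rw [if_neg h1]
      simp only [cf, if_neg h0, if_neg h1]
      match v with
      | none => exact isHomogeneous_zero _ _ _
      | some j =>
        simp only [Option.elim]
        split_ifs with hle
        · exact GG_homog K m (i.val - 1) (by omega) j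
        · exact isHomogeneous_zero _ _ _

def ishBasis : Module.Basis (Fin (m+2)) (SS K m) (logDer K (coneIshL K m)) :=
  Module.Basis.mk (v := thN K m) (indepN K m) (spanN K m)

lemma ishBasis_apply (i : Fin (m+2)) :
    ((ishBasis K m i : (logDer K (coneIshL K m))) : Derivation K (SS K m) (SS K m))
      = th K m i := by
  rw [ishBasis, Module.Basis.mk_apply]
  rfl

end IshAux

/-- The cone over the Ish arrangement `Ish_ℓ` (here `ℓ = m+1 ≥ 1`) is free with
exponents (0, 1, ℓ, ℓ, …, ℓ), where ℓ appears ℓ−1 times: there is a basis of the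
module of logarithmic derivations consisting of homogeneous derivations of degrees
0, 1, ℓ, …, ℓ. -/
theorem cone_ish_free (K : Type*) [Field K] [CharZero K] (m : ℕ) :
    ∃ b : Module.Basis (Fin (m + 2)) (MvPolynomial (Option (Fin (m + 1))) K)
        (logDer K (coneIshL K m)),
      ∀ i, IsHomogDeriv
        ((b i : Derivation K (MvPolynomial (Option (Fin (m + 1))) K)
          (MvPolynomial (Option (Fin (m + 1))) K)))
        (if i.val = 0 then 0 else if i.val = 1 then 1 else m + 1) := by
  refine ⟨ishBasis K m, fun i => ?_⟩
  intro v
  rw [ishBasis_apply K m i]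
  exact th_homog K m i v


end
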